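/- Let a(n) = ∑_{k=0}^{n} (number of surjective functions from Fin n onto Fin k), the number of preferential arrangements (ordered set partitions) of an n-element set (so a(0)=1, a(1)=1, a(2)=3, a(3)=13, a(4)=75, a(5)=541, …). Then, as formal power series over ℚ, (2 − exp(X)) · ∑_{n≥0} a(n)·X^n/n! = 1; equivalently, the exponential generating function of a(n) is 1/(2 − e^X). -/

import Mathlib

open Finset

private lemma mem_of_filter_eq11 {n k : ℕ} {f : Fin n → Fin (k+1)} {s : Finset (Fin n)}
    (hfs : Finset.univ.filter (fun i => f i = Fin.last k) = s) {i : Fin n} :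
    i ∈ s ↔ f i = Fin.last k := by
  rw [← hfs, Finset.mem_filter]; simp

private noncomputable def fiberEquiv11 (n k : ℕ) (s : Finset (Fin n)) (hs : s.Nonempty) :
    {F : {f : Fin n → Fin (k+1) // Function.Surjective f} //
        Finset.univ.filter (fun i => F.1 i = Fin.last k) = s}
      ≃ {g : {x // x ∈ sᶜ} → Fin k // Function.Surjective g} where
  toFun F :=
    ⟨fun x => (F.1.1 x.1).castPred (fun hlast =>
        (Finset.mem_compl.mp x.2) ((mem_of_filter_eq11 F.2).mpr hlast)),
     by
      intro y
      obtain ⟨i, hi⟩ := F.1.2 y.castSucc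
      have hil : F.1.1 i ≠ Fin.last k := by rw [hi]; exact (Fin.castSucc_lt_last y).ne
      have his : i ∉ s := fun h => hil ((mem_of_filter_eq11 F.2).mp h)
      exact ⟨⟨i, Finset.mem_compl.mpr his⟩,
        by rw [← Fin.castSucc_inj, Fin.castSucc_castPred]; exact hi⟩⟩
  invFun G :=
    ⟨⟨fun i => if h : i ∈ s then Fin.last k else (G.1 ⟨i, Finset.mem_compl.mpr h⟩).castSucc,
      by
        intro y
        by_cases hy : y = Fin.last k
        · exact ⟨hs.choose, by simp [hs.choose_spec, hy]⟩
        · obtain ⟨x, hx⟩ := G.2 (y.castPred hy)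
          refine ⟨x.1, ?_⟩
          have hxs : x.1 ∉ s := Finset.mem_compl.mp x.2
          dsimp only
          rw [dif_neg hxs]
          have : (⟨x.1, Finset.mem_compl.mpr hxs⟩ : {x // x ∈ sᶜ}) = x := rfl
          rw [this, hx, Fin.castSucc_castPred]⟩,
     by
      ext i
      simp only [Finset.mem_filter, Finset.mem_univ, true_and]
      constructor
      · intro h
        by_contra hi
        rw [dif_neg hi] at h
        exact (Fin.castSucc_lt_last _).ne h
      · intro h; rw [dif_pos h]⟩
  left_inv F := by
    apply Subtype.ext; apply Subtype.ext; funext i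
    show (if h : i ∈ s then Fin.last k else _) = F.1.1 i
    by_cases h : i ∈ s
    · rw [dif_pos h]
      exact ((mem_of_filter_eq11 F.2).mp h).symm
    · rw [dif_neg h, Fin.castSucc_castPred]
  right_inv G := by
    apply Subtype.ext; funext x
    have hxs : x.1 ∉ s := Finset.mem_compl.mp x.2
    dsimp only
    rw [← Fin.castSucc_inj, Fin.castSucc_castPred, dif_neg hxs]

private noncomputable def S11 (n k : ℕ) : ℕ :=
  Nat.card {f : Fin n → Fin k // Function.Surjective f}

private lemma S11_card {α : Type} [Fintype α] [DecidableEq α] (k : ℕ) :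
    Nat.card {f : α → Fin k // Function.Surjective f} = S11 (Fintype.card α) k := by
  apply Nat.card_congr
  refine Equiv.subtypeEquiv (Equiv.arrowCongr (Fintype.equivFin α) (Equiv.refl _)) (fun f => ?_)
  have : (Equiv.arrowCongr (Fintype.equivFin α) (Equiv.refl (Fin k))) f
      = f ∘ (Fintype.equivFin α).symm := rfl
  rw [this]
  exact (Function.Surjective.of_comp_iff f (Fintype.equivFin α).symm.surjective).symm

private lemma S11_eq_zero {n k : ℕ} (h : n < k) : S11 n k = 0 := by
  rw [S11, Nat.card_eq_fintype_card, Fintype.card_eq_zero_iff]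
  exact ⟨fun ⟨f, hf⟩ => absurd (Fintype.card_fin k ▸ Fintype.card_fin n ▸
    Fintype.card_le_of_surjective f hf) (by omega)⟩

private lemma S11_zero {n : ℕ} (h : 0 < n) : S11 n 0 = 0 := by
  rw [S11, Nat.card_eq_fintype_card, Fintype.card_eq_zero_iff]
  exact ⟨fun ⟨f, hf⟩ => (f ⟨0, h⟩).elim0⟩

private lemma key11 (n k : ℕ) :
    S11 n (k+1) = ∑ j ∈ Finset.range n, n.choose j * S11 j k := by
  classical
  have h1 : S11 n (k+1)
      = ∑ s ∈ Finset.univ.filter (Finset.Nonempty (α := Fin n)), S11 (n - s.card) k := by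
    rw [S11, Nat.card_eq_fintype_card, ← Finset.card_univ]
    rw [Finset.card_eq_sum_card_fiberwise
      (f := fun F : {f : Fin n → Fin (k+1) // Function.Surjective f} =>
        Finset.univ.filter (fun i => F.1 i = Fin.last k))
      (t := Finset.univ.filter (Finset.Nonempty (α := Fin n)))
      (by
        intro F _
        simp only [Finset.mem_filter, Finset.mem_univ, true_and]
        obtain ⟨i, hi⟩ := F.2 (Fin.last k)
        exact Finset.mem_filter.mpr ⟨Finset.mem_univ _, i, Finset.mem_filter.mpr ⟨Finset.mem_univ _, hi⟩⟩)]
    refine Finset.sum_congr rfl (fun s hs => ?_)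
    have hs' : s.Nonempty := (Finset.mem_filter.mp hs).2
    rw [← Fintype.card_subtype, ← Nat.card_eq_fintype_card,
      Nat.card_congr (fiberEquiv11 n k s hs'), S11_card, Fintype.card_coe,
      Finset.card_compl, Fintype.card_fin]
  rw [h1]
  have h2 : ∑ s ∈ Finset.univ.filter (Finset.Nonempty (α := Fin n)), S11 (n - s.card) k
        + S11 n k
      = ∑ m ∈ Finset.range (n + 1), n.choose m * S11 (n - m) k := by
    have hsplit := Finset.sum_filter_add_sum_filter_not (Finset.univ : Finset (Finset (Fin n)))
      Finset.Nonempty (fun s => S11 (n - s.card) k)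
    have hne : (Finset.univ : Finset (Finset (Fin n))).filter (fun s => ¬ s.Nonempty)
        = {∅} := by
      ext s
      simp [Finset.not_nonempty_iff_eq_empty]
    rw [hne, Finset.sum_singleton, Finset.card_empty, Nat.sub_zero] at hsplit
    rw [hsplit, ← Finset.powerset_univ, Finset.sum_powerset_apply_card
      (fun m => S11 (n - m) k), Finset.card_univ, Fintype.card_fin]
    simp
  have h3 : ∑ m ∈ Finset.range (n + 1), n.choose m * S11 (n - m) k
      = S11 n k + ∑ m ∈ Finset.range n, n.choose (m + 1) * S11 (n - (m + 1)) k := by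
    rw [Finset.sum_range_succ']
    simp [Nat.add_comm]
  have h4 : ∑ m ∈ Finset.range n, n.choose (m + 1) * S11 (n - (m + 1)) k
      = ∑ j ∈ Finset.range n, n.choose j * S11 j k := by
    rw [← Finset.sum_range_reflect]
    refine Finset.sum_congr rfl (fun j hj => ?_)
    rw [Finset.mem_range] at hj
    have e1 : n - 1 - j + 1 = n - j := by omega
    have e2 : n - (n - j) = j := by omega
    rw [e1, e2, Nat.choose_symm hj.le]
  omega

private lemma a_rec11 (a : ℕ → ℕ)
    (ha : ∀ n : ℕ, a n = ∑ k ∈ Finset.range (n + 1), S11 n k)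
    {n : ℕ} (hn : 0 < n) :
    a n = ∑ j ∈ Finset.range n, n.choose j * a j := by
  rw [ha n, Finset.sum_range_succ', S11_zero hn, add_zero]
  calc ∑ k ∈ Finset.range n, S11 n (k+1)
      = ∑ k ∈ Finset.range n, ∑ j ∈ Finset.range n, n.choose j * S11 j k :=
        Finset.sum_congr rfl fun k _ => key11 n k
    _ = ∑ j ∈ Finset.range n, ∑ k ∈ Finset.range n, n.choose j * S11 j k :=
        Finset.sum_comm
    _ = ∑ j ∈ Finset.range n, n.choose j * a j := by
        refine Finset.sum_congr rfl fun j hj => ?_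
        rw [← Finset.mul_sum]
        congr 1
        rw [Finset.mem_range] at hj
        rw [ha j]
        refine (Finset.sum_subset (Finset.range_subset_range.mpr (by omega)) ?_).symm
        intro k _ hk
        rw [Finset.mem_range, not_lt] at hk
        exact S11_eq_zero (by omega)

/-- The exponential generating function of the numbers of preferential arrangements
(ordered set partitions) `a n = ∑_{k ≤ n} #{surjections (Fin n) ↠ (Fin k)}`
is `1 / (2 - exp X)`. -/
theorem stmt11 (a : ℕ → ℕ)
    (ha : ∀ n : ℕ, a n =
      ∑ k ∈ Finset.range (n + 1), Nat.card {f : Fin n → Fin k // Function.Surjective f}) :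
    (2 - PowerSeries.exp ℚ) * (PowerSeries.mk fun n => (a n : ℚ) / (n.factorial : ℚ)) = 1 := by
  have ha' : ∀ n : ℕ, a n = ∑ k ∈ Finset.range (n + 1), S11 n k := ha
  have ha0 : a 0 = 1 := by
    rw [ha' 0, show (0:ℕ)+1 = 1 from rfl, Finset.range_one, Finset.sum_singleton,
      S11, Nat.card_eq_fintype_card]
    decide
  have hc : ∀ i : ℕ, (PowerSeries.coeff (R := ℚ) i) (2 - PowerSeries.exp ℚ)
      = (if i = 0 then 2 else 0) - 1 / (i.factorial : ℚ) := by
    intro i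
    have h2 : (2 : PowerSeries ℚ) = PowerSeries.C (R := ℚ) 2 := by rw [map_ofNat]
    rw [map_sub, PowerSeries.coeff_exp, h2, PowerSeries.coeff_C]
    rfl
  apply PowerSeries.ext
  intro n
  rw [PowerSeries.coeff_mul, Finset.Nat.sum_antidiagonal_eq_sum_range_succ_mk]
  simp only [PowerSeries.coeff_mk, hc]
  rcases n with _ | m
  · simp [ha0]
    norm_num
  · -- key rational identity
    have hQ : (a (m+1) : ℚ) / (((m+1).factorial : ℕ) : ℚ)
        = ∑ i ∈ Finset.range (m+1),
            (1 / (((i+1).factorial : ℕ) : ℚ)) * ((a (m-i) : ℚ) / (((m-i).factorial : ℕ) : ℚ)) := by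
      have hrc : (a (m+1) : ℚ)
          = ∑ j ∈ Finset.range (m+1), (((m+1).choose j : ℕ) : ℚ) * (a j : ℚ) := by
        have h := a_rec11 a ha' (Nat.succ_pos m)
        exact_mod_cast congrArg (Nat.cast : ℕ → ℚ) h
      rw [← Finset.sum_range_reflect]
      rw [hrc, Finset.sum_div]
      refine Finset.sum_congr rfl (fun j hj => ?_)
      rw [Finset.mem_range] at hj
      simp only [Nat.add_sub_cancel]
      have e1 : m - (m - j) = j := by omega
      have e2 : m - j + 1 = m + 1 - j := by omega
      rw [e1, e2]
      have hfac : ((((m+1).choose j) * j.factorial * (m+1-j).factorial : ℕ) : ℚ)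
          = (((m+1).factorial : ℕ) : ℚ) := by
        exact_mod_cast congrArg (Nat.cast : ℕ → ℚ)
          (Nat.choose_mul_factorial_mul_factorial (by omega : j ≤ m + 1))
      push_cast at hfac ⊢
      have h1 : (j.factorial : ℚ) ≠ 0 := Nat.cast_ne_zero.mpr j.factorial_ne_zero
      have h2 : ((m+1-j).factorial : ℚ) ≠ 0 := Nat.cast_ne_zero.mpr (m+1-j).factorial_ne_zero
      have h3 : ((m+1).factorial : ℚ) ≠ 0 := Nat.cast_ne_zero.mpr (m+1).factorial_ne_zero
      field_simp
      linear_combination (a j : ℚ) * hfac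
    rw [Finset.sum_range_succ']
    have hterm : ∀ i ∈ Finset.range (m+1),
        ((if i + 1 = 0 then (2:ℚ) else 0) - 1 / (((i+1).factorial : ℕ) : ℚ))
          * ((a (m + 1 - (i+1)) : ℚ) / (((m + 1 - (i+1)).factorial : ℕ) : ℚ))
        = -((1 / (((i+1).factorial : ℕ) : ℚ))
            * ((a (m-i) : ℚ) / (((m-i).factorial : ℕ) : ℚ))) := by
      intro i _
      have e : m + 1 - (i+1) = m - i := by omega
      rw [e, if_neg (Nat.succ_ne_zero i)]
      ring
    rw [Finset.sum_congr rfl hterm, Finset.sum_neg_distrib, ← hQ]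
    rw [PowerSeries.coeff_one]
    norm_num
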